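/- Let G be a countable discrete group with a sofic approximation Σ = (σ_n), let Φ = φ^G : (X^G, μ, S, d_X) → (Y^G, ν, S, d_Y) be a factor map of metric G-processes, and let λ = ∫ δ_{(x, Φ(x))} μ(dx) be its graphical joining. Suppose x_n ∈ X^{V_n} and y_n, w_n ∈ Y^{V_n} are sequences such that both P^{σ_n}_{(x_n, y_n)} and P^{σ_n}_{(x_n, w_n)} weak*-converge to λ. Then d_Y^{(V_n)}(y_n, w_n) → 0. -/

import Mathlib

open MeasureTheory Filter Topology
open scoped ENNReal NNReal
open scoped Uniformity

section Defs

variable {G : Type*} [Group G]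

/-- The right-shift action of `G` on `G → X`. -/
def shift {X : Type*} (g : G) (x : G → X) : G → X := fun h => x (h * g)

/-- The process map `φ^G` associated to `φ : X^G → Y`. -/
def procMap {X Y : Type*} (φ : (G → X) → Y) (x : G → X) : G → Y := fun g => φ (shift g x)

/-- Shift-invariance of a measure on `X^G`. -/
def ShiftInvariant {X : Type*} [MeasurableSpace X] (μ : Measure (G → X)) : Prop :=
  ∀ g : G, μ.map (shift g) = μ

/-- The pullback name of `x : V → X` at `v ∈ V`. -/
def pullbackName {V X : Type*} (σ : G → Equiv.Perm V) (v : V) (x : V → X) : G → X :=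
  fun g => x (σ g v)

lemma measurable_shift {X : Type*} [MeasurableSpace X] (g : G) :
    Measurable (shift (X := X) g) :=
  measurable_pi_lambda _ fun h => measurable_pi_apply (h * g)

/-- The empirical distribution of a model `x : V → X` along `σ : G → Sym(V)`. -/
noncomputable def empDist {V X : Type*} [Fintype V] [Nonempty V] [MeasurableSpace X]
    (σ : G → Equiv.Perm V) (x : V → X) : ProbabilityMeasure (G → X) :=
  ⟨(Fintype.card V : ℝ≥0∞)⁻¹ • ∑ v : V, Measure.dirac (pullbackName σ v x), by
    constructor
    simp only [Measure.smul_apply, Measure.coe_finset_sum, Finset.sum_apply,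
      Measure.dirac_apply_of_mem (Set.mem_univ _), Finset.sum_const, Finset.card_univ,
      nsmul_eq_mul, mul_one, smul_eq_mul]
    exact ENNReal.inv_mul_cancel (by exact_mod_cast Fintype.card_ne_zero)
      (by simp)⟩

/-- A sofic approximation to `G`. -/
def IsSoficApprox (V : ℕ → Type*) (σ : ∀ n, G → Equiv.Perm (V n)) : Prop :=
  (∀ g h : G, Tendsto
      (fun n => (Nat.card {v : V n // σ n g (σ n h v) = σ n (g * h) v} : ℝ) / (Nat.card (V n) : ℝ))
      atTop (𝓝 1)) ∧
  ∀ g : G, g ≠ 1 → Tendsto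
      (fun n => (Nat.card {v : V n // σ n g v ≠ v} : ℝ) / (Nat.card (V n) : ℝ))
      atTop (𝓝 1)

/-- Normalized Hamming average of `dX` over `V`. -/
noncomputable def hamming {V X : Type*} [Fintype V] (dX : X → X → ℝ) (x y : V → X) : ℝ :=
  (∑ v : V, dX (x v) (y v)) / (Fintype.card V : ℝ)

/-- The property of having connected model spaces relative to the sofic approximation `σ`. -/
def ConnectedModelSpaces [Countable G] (V : ℕ → Type*) [∀ n, Fintype (V n)] [∀ n, Nonempty (V n)]
    (σ : ∀ n, G → Equiv.Perm (V n))
    (X : Type*) [TopologicalSpace X] [MeasurableSpace X] [OpensMeasurableSpace X]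
    [SecondCountableTopology X]
    (dX : X → X → ℝ) (μ : ProbabilityMeasure (G → X)) : Prop :=
  ∀ n : ℕ → ℕ, StrictMono n → ∀ x y : (i : ℕ) → V (n i) → X,
    Tendsto (fun i => empDist (σ (n i)) (x i)) atTop (𝓝 μ) →
    Tendsto (fun i => empDist (σ (n i)) (y i)) atTop (𝓝 μ) →
    ∃ (δ : ℕ → ℝ) (ℓ : ℕ → ℕ) (p : (i : ℕ) → ℕ → V (n i) → X),
      Antitone δ ∧ (∀ i, 0 < δ i) ∧ Tendsto δ atTop (𝓝 0) ∧
      (∀ i, p i 0 = x i) ∧ (∀ i, p i (ℓ i) = y i) ∧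
      (∀ i j, j < ℓ i → hamming dX (p i j) (p i (j + 1)) < δ i) ∧
      ∀ O ∈ 𝓝 μ, ∀ᶠ i in atTop, ∀ j ≤ ℓ i, empDist (σ (n i)) (p i j) ∈ O

/-- The graph map `x ↦ (x, Φ(x))`, viewed as a map into `(X × Y)^G`. -/
def graphMap {X Y : Type*} (φ : (G → X) → Y) (x : G → X) : G → X × Y :=
  fun g => (x g, φ (shift g x))

lemma measurable_graphMap {X Y : Type*} [MeasurableSpace X] [MeasurableSpace Y]
    {φ : (G → X) → Y} (hφ : Measurable φ) : Measurable (graphMap (G := G) φ) :=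
  measurable_pi_lambda _ fun g => (measurable_pi_apply g).prodMk (hφ.comp (measurable_shift g))

lemma measurable_procMap {X Y : Type*} [MeasurableSpace X] [MeasurableSpace Y]
    {φ : (G → X) → Y} (hφ : Measurable φ) : Measurable (procMap (G := G) φ) :=
  measurable_pi_lambda _ fun g => hφ.comp (measurable_shift g)

/-- The graphical joining of `μ` and its pushforward under the factor map generated by `φ`. -/
noncomputable def graphJoin {X Y : Type*} [MeasurableSpace X] [MeasurableSpace Y]
    {φ : (G → X) → Y} (hφ : Measurable φ) (μ : ProbabilityMeasure (G → X)) :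
    ProbabilityMeasure (G → X × Y) :=
  μ.map (f := graphMap φ) (measurable_graphMap hφ).aemeasurable

/-- Model-surjectivity of the factor map generated by `φ`, relative to `σ`. -/
def ModelSurjective [Countable G] (V : ℕ → Type*) [∀ n, Fintype (V n)] [∀ n, Nonempty (V n)]
    (σ : ∀ n, G → Equiv.Perm (V n))
    {X Y : Type*} [TopologicalSpace X] [MeasurableSpace X] [OpensMeasurableSpace X]
    [SecondCountableTopology X]
    [TopologicalSpace Y] [MeasurableSpace Y] [OpensMeasurableSpace Y] [SecondCountableTopology Y]
    (φ : (G → X) → Y) (hφ : Measurable φ)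
    (μ : ProbabilityMeasure (G → X)) (ν : ProbabilityMeasure (G → Y)) : Prop :=
  ∀ n : ℕ → ℕ, StrictMono n → ∀ y : (i : ℕ) → V (n i) → Y,
    Tendsto (fun i => empDist (σ (n i)) (y i)) atTop (𝓝 ν) →
    ∃ x : (i : ℕ) → V (n i) → X,
      Tendsto (fun i => empDist (σ (n i)) (fun v => (x i v, y i v))) atTop (𝓝 (graphJoin hφ μ))

lemma my_lusin {Ω Y : Type*} [TopologicalSpace Ω] [CompactSpace Ω] [T2Space Ω]
    [TopologicalSpace.PseudoMetrizableSpace Ω]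
    [MeasurableSpace Ω] [BorelSpace Ω]
    [TopologicalSpace Y] [SecondCountableTopology Y]
    [MeasurableSpace Y] [OpensMeasurableSpace Y]
    (μ : Measure Ω) [IsFiniteMeasure μ] {φ : Ω → Y} (hφ : Measurable φ)
    {ε : ℝ≥0∞} (hε : ε ≠ 0) :
    ∃ K : Set Ω, IsCompact K ∧ ContinuousOn φ K ∧ μ Kᶜ ≤ ε := by
  obtain ⟨b, hbc, -, hbasis⟩ := TopologicalSpace.exists_countable_basis Y
  haveI : Countable b := hbc.to_subtype
  obtain ⟨δ, hδpos, hδsum⟩ := ENNReal.exists_pos_sum_of_countable hε b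
  set A : b → Set Ω := fun i => φ ⁻¹' (i : Set Y) with hA
  have hAm : ∀ i, MeasurableSet (A i) := fun i => hφ (hbasis.isOpen i.2).measurableSet
  have key : ∀ i : b, ∃ F O : Set Ω, IsCompact F ∧ F ⊆ A i ∧ IsOpen O ∧ A i ⊆ O ∧
      μ (O \ F) < (δ i : ℝ≥0∞) := by
    intro i
    have hhalf : ((δ i : ℝ≥0∞) / 2) ≠ 0 :=
      (ENNReal.half_pos (ENNReal.coe_pos.mpr (hδpos i)).ne').ne'
    obtain ⟨F, hFA, hFc, hF⟩ := (hAm i).exists_isCompact_diff_lt (measure_ne_top μ _) hhalf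
    obtain ⟨O, hAO, hOo, -, hO⟩ := (hAm i).exists_isOpen_diff_lt (measure_ne_top μ _) hhalf
    refine ⟨F, O, hFc, hFA, hOo, hAO, ?_⟩
    have hsub : O \ F ⊆ (O \ A i) ∪ (A i \ F) := by
      intro z hz
      by_cases hzA : z ∈ A i
      · exact Or.inr ⟨hzA, hz.2⟩
      · exact Or.inl ⟨hz.1, hzA⟩
    calc μ (O \ F) ≤ μ ((O \ A i) ∪ (A i \ F)) := measure_mono hsub
      _ ≤ μ (O \ A i) + μ (A i \ F) := measure_union_le _ _
      _ < (δ i : ℝ≥0∞) / 2 + (δ i : ℝ≥0∞) / 2 := ENNReal.add_lt_add hO hF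
      _ = (δ i : ℝ≥0∞) := ENNReal.add_halves _
  choose F O hFc hFA hOo hAO hμOF using key
  refine ⟨(⋃ i, (O i \ F i))ᶜ, ?_, ?_, ?_⟩
  · exact ((isOpen_iUnion fun i => (hOo i).sdiff (hFc i).isClosed).isClosed_compl).isCompact
  · intro z hz s hs
    obtain ⟨U, hUb, hzU, hUs⟩ := hbasis.mem_nhds_iff.mp hs
    set i : b := ⟨U, hUb⟩
    have hzA : z ∈ A i := hzU
    have hzF : z ∈ F i := by
      by_contra hzF
      exact hz (Set.mem_iUnion.mpr ⟨i, ⟨hAO i hzA, hzF⟩⟩)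
    refine _root_.mem_nhdsWithin.mpr ⟨O i, hOo i, hAO i hzA, ?_⟩
    rintro u ⟨huO, huK⟩
    have huF : u ∈ F i := by
      by_contra huF
      exact huK (Set.mem_iUnion.mpr ⟨i, ⟨huO, huF⟩⟩)
    exact hUs (hFA i huF)
  · rw [compl_compl]
    calc μ (⋃ i, (O i \ F i)) ≤ ∑' i, μ (O i \ F i) := measure_iUnion_le _
      _ ≤ ∑' i, (δ i : ℝ≥0∞) := ENNReal.tsum_le_tsum fun i => (hμOF i).le
      _ ≤ ε := hδsum.le


lemma integral_empDist {G : Type*} [Group G] {V Z : Type*} [Fintype V] [Nonempty V]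
    [TopologicalSpace Z] [MeasurableSpace Z] [OpensMeasurableSpace Z]
    (σ : G → Equiv.Perm V) (z : V → Z) {f : (G → Z) → ℝ}
    (hf : MeasureTheory.StronglyMeasurable f) (hbd : ∃ C, ∀ u, ‖f u‖ ≤ C) :
    (∫ u, f u ∂((empDist σ z : MeasureTheory.ProbabilityMeasure (G → Z)) :
        MeasureTheory.Measure (G → Z)))
      = (∑ v, f (pullbackName σ v z)) / (Fintype.card V : ℝ) := by
  have hcoe : ((empDist σ z : MeasureTheory.ProbabilityMeasure (G → Z)) :
      MeasureTheory.Measure (G → Z))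
      = (Fintype.card V : ℝ≥0∞)⁻¹ •
        ∑ v : V, MeasureTheory.Measure.dirac (pullbackName σ v z) := rfl
  rw [hcoe, MeasureTheory.integral_smul_measure, MeasureTheory.integral_finset_sum_measure]
  · simp only [MeasureTheory.integral_dirac' f _ hf]
    rw [ENNReal.toReal_inv]
    simp [div_eq_inv_mul]
  · intro v _
    obtain ⟨C, hC⟩ := hbd
    refine ⟨hf.aestronglyMeasurable, ?_⟩
    refine MeasureTheory.HasFiniteIntegral.mono'
      (MeasureTheory.hasFiniteIntegral_const C) ?_
    exact Filter.Eventually.of_forall hC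

end Defs

/-- If the joint empirical distributions of `(x_n, y_n)` and of `(x_n, w_n)` both converge weak*
to the graphical joining of a factor map, then `d_Y^{(V_n)}(y_n, w_n) → 0`. -/
theorem dist_tendsto_zero_of_graphical {G : Type} [Group G] [Countable G]
    (V : ℕ → Type) [∀ n, Fintype (V n)] [∀ n, Nonempty (V n)]
    (σ : ∀ n, G → Equiv.Perm (V n)) (hsofic : IsSoficApprox V σ)
    {X Y : Type} [MetricSpace X] [CompactSpace X] [MeasurableSpace X] [BorelSpace X]
    [MetricSpace Y] [CompactSpace Y] [MeasurableSpace Y] [BorelSpace Y]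
    (μ : ProbabilityMeasure (G → X)) (ν : ProbabilityMeasure (G → Y))
    (hμ : ShiftInvariant μ.toMeasure)
    (φ : (G → X) → Y) (hφ : Measurable φ)
    (hfac : μ.toMeasure.map (procMap φ) = ν.toMeasure)
    (x : (n : ℕ) → V n → X) (y w : (n : ℕ) → V n → Y)
    (hy : Tendsto (fun n => empDist (σ n) (fun v => (x n v, y n v))) atTop (𝓝 (graphJoin hφ μ)))
    (hw : Tendsto (fun n => empDist (σ n) (fun v => (x n v, w n v))) atTop (𝓝 (graphJoin hφ μ))) :
    Tendsto (fun n => hamming dist (y n) (w n)) atTop (𝓝 0) := by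
  classical
  obtain ⟨D₁, hD₁⟩ := Metric.isBounded_iff.mp (isCompact_univ (X := Y)).isBounded
  set D : ℝ := max D₁ 0 with hDdef
  have hD0 : 0 ≤ D := le_max_right _ _
  have hDbd : ∀ a b : Y, dist a b ≤ D := fun a b =>
    le_trans (hD₁ (Set.mem_univ a) (Set.mem_univ b)) (le_max_left _ _)
  refine Metric.tendsto_nhds.mpr fun ε₀ hε₀ => ?_
  set η : ℝ := ε₀ / (8 * (D + 1)) with hηdef
  have hD1pos : (0:ℝ) < D + 1 := by linarith
  have hηpos : 0 < η := by rw [hηdef]; positivity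
  have hηeq : 4 * (D + 1) * η = ε₀ / 2 := by
    rw [hηdef]; field_simp; ring
  -- Lusin's theorem
  obtain ⟨K, hKc, hKcont, hKμ⟩ := my_lusin (μ := μ.toMeasure) hφ
      (ε := ENNReal.ofReal η) (ENNReal.ofReal_pos.mpr hηpos).ne'
  have hKmeas : MeasurableSet K := hKc.isClosed.measurableSet
  have hμK : (1:ℝ) - η ≤ (μ.toMeasure K).toReal := by
    have h1 : μ.toMeasure K + μ.toMeasure Kᶜ = 1 := by
      rw [measure_add_measure_compl hKmeas, measure_univ]
    have h2 : (μ.toMeasure Kᶜ).toReal ≤ η :=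
      ENNReal.toReal_le_of_le_ofReal hηpos.le hKμ
    have h3 : (μ.toMeasure K).toReal + (μ.toMeasure Kᶜ).toReal = 1 := by
      rw [← ENNReal.toReal_add (measure_ne_top _ _) (measure_ne_top _ _), h1, ENNReal.toReal_one]
    linarith
  -- uniform continuity of φ on K
  have huc : UniformContinuousOn φ K := hKc.uniformContinuousOn_of_continuous hKcont
  have hr : {p : Y × Y | dist p.1 p.2 < ε₀ / 6} ∈ 𝓤 Y :=
    Metric.dist_mem_uniformity (by linarith)
  have hEmem := huc hr
  rw [Filter.mem_map, Filter.mem_inf_principal] at hEmem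
  obtain ⟨E, hE𝓤, hEprop⟩ : ∃ E ∈ 𝓤 (G → X), ∀ a b, a ∈ K → b ∈ K → (a, b) ∈ E →
      dist (φ a) (φ b) < ε₀ / 6 :=
    ⟨_, hEmem, fun a b ha hb hab => hab ⟨ha, hb⟩⟩
  obtain ⟨Dd, hDd𝓤, hDdsymm, hDdcomp⟩ := comp_symm_mem_uniformity_sets hE𝓤
  obtain ⟨D₀, hD₀pair, hD₀sub⟩ := uniformity_hasBasis_open.mem_iff.mp hDd𝓤
  obtain ⟨hD₀𝓤, hD₀open⟩ := hD₀pair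
  -- the open neighborhood U of the graph of φ over K
  set U : Set ((G → X) × Y) :=
      ⋃ a ∈ K, {q : G → X | (a, q) ∈ D₀} ×ˢ Metric.ball (φ a) (ε₀ / 6) with hUdef
  have hUopen : IsOpen U := isOpen_biUnion fun a _ =>
    (hD₀open.preimage (Continuous.prodMk_right a)).prod Metric.isOpen_ball
  set C : Set ((G → X) × Y) := (fun a => (a, φ a)) '' K with hCdef
  have hCcomp : IsCompact C := hKc.image_of_continuousOn (continuousOn_id.prodMk hKcont)
  have hCU : C ⊆ U := by
    rintro p ⟨a, haK, rfl⟩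
    exact Set.mem_iUnion₂.mpr ⟨a, haK,
      ⟨refl_mem_uniformity hD₀𝓤, Metric.mem_ball_self (by linarith)⟩⟩
  have hpair : ∀ (xb : G → X) (yb wb : Y),
      (xb, yb) ∈ U → (xb, wb) ∈ U → dist yb wb < ε₀ / 2 := by
    intro xb yb wb hyU hwU
    obtain ⟨a, haK, hmy⟩ := Set.mem_iUnion₂.mp hyU
    obtain ⟨b, hbK, hmw⟩ := Set.mem_iUnion₂.mp hwU
    have hab : (a, b) ∈ SetRel.comp Dd Dd :=
      ⟨xb, hD₀sub hmy.1, (haveI := hDdsymm; SetRel.symm Dd (hD₀sub hmw.1))⟩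
    have hφab : dist (φ a) (φ b) < ε₀ / 6 := hEprop a b haK hbK (hDdcomp hab)
    have h1 : dist yb (φ a) < ε₀ / 6 := Metric.mem_ball.mp hmy.2
    have h2 : dist wb (φ b) < ε₀ / 6 := Metric.mem_ball.mp hmw.2
    have h3 : dist yb wb ≤ dist yb (φ a) + dist (φ a) (φ b) + dist (φ b) wb :=
      dist_triangle4 _ _ _ _
    rw [dist_comm (φ b) wb] at h3
    linarith
  -- Urysohn function
  obtain ⟨f₀, hf₀C, hf₀Uc, hf₀mem⟩ :=
    exists_continuous_zero_one_of_isCompact hCcomp hUopen.isClosed_compl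
      (Set.disjoint_left.mpr fun p hp hpc => hpc (hCU hp))
  -- the test function on (G → X × Y)
  set h : (G → X × Y) → ℝ :=
      fun u => 1 - f₀ (fun gg => (u gg).1, (u 1).2) with hhdef
  have hTcont : Continuous (fun u : G → X × Y => ((fun gg => (u gg).1, (u 1).2) : (G → X) × Y)) :=
    (continuous_pi fun gg => (continuous_apply gg).fst).prodMk ((continuous_apply 1).snd)
  have hhcont : Continuous h := continuous_const.sub (f₀.continuous.comp hTcont)
  have hh01 : ∀ u, 0 ≤ h u ∧ h u ≤ 1 := by
    intro u
    obtain ⟨ha, hb⟩ := hf₀mem (((fun gg => (u gg).1, (u 1).2)) : (G → X) × Y)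
    constructor
    · rw [hhdef]; simp only; linarith
    · rw [hhdef]; simp only; linarith
  have hUof : ∀ p : (G → X) × Y, 0 < 1 - f₀ p → p ∈ U := by
    intro p hp
    by_contra hpU
    have h1 : f₀ p = 1 := by simpa using hf₀Uc hpU
    rw [h1] at hp; linarith
  set Fbcf : BoundedContinuousFunction (G → X × Y) ℝ :=
    BoundedContinuousFunction.mkOfCompact (ContinuousMap.mk h hhcont) with hFdef
  -- lower bound on the limit integral
  have hLint : (1:ℝ) - η ≤ ∫ u, h u ∂((graphJoin hφ μ : ProbabilityMeasure _) :
      Measure (G → X × Y)) := by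
    rw [graphJoin, ProbabilityMeasure.toMeasure_map,
      integral_map (measurable_graphMap hφ).aemeasurable hhcont.aestronglyMeasurable]
    have hpt : ∀ xx : G → X, h (graphMap φ xx) = 1 - f₀ (xx, φ xx) := by
      intro xx
      show 1 - f₀ (xx, φ (shift (1:G) xx)) = 1 - f₀ (xx, φ xx)
      rw [show shift (1:G) xx = xx from funext fun hh => by simp [shift]]
    have hle : ∀ xx : G → X, K.indicator (fun _ => (1:ℝ)) xx ≤ h (graphMap φ xx) := by
      intro xx
      rw [hpt]
      by_cases hx : xx ∈ K
      · have : f₀ (xx, φ xx) = 0 := by simpa using hf₀C ⟨xx, hx, rfl⟩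
        simp [hx, this]
      · have := (hf₀mem (xx, φ xx)).2
        simp only [Set.indicator_of_notMem hx]
        linarith
    have hint2 : Integrable (fun xx => h (graphMap φ xx)) μ.toMeasure := by
      refine ⟨(hhcont.measurable.comp (measurable_graphMap hφ)).aestronglyMeasurable, ?_⟩
      refine MeasureTheory.HasFiniteIntegral.mono' (hasFiniteIntegral_const (1:ℝ)) ?_
      refine Filter.Eventually.of_forall fun xx => ?_
      rw [Real.norm_eq_abs, abs_of_nonneg (hh01 _).1]
      exact (hh01 _).2
    calc (1:ℝ) - η ≤ (μ.toMeasure K).toReal := hμK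
      _ = ∫ xx, K.indicator (fun _ => (1:ℝ)) xx ∂μ.toMeasure := by
          rw [integral_indicator_const (1:ℝ) hKmeas]; simp
          rw [← ProbabilityMeasure.ennreal_coeFn_eq_coeFn_toMeasure, ENNReal.coe_toReal]
      _ ≤ ∫ xx, h (graphMap φ xx) ∂μ.toMeasure :=
          integral_mono ((integrable_const (1:ℝ)).indicator hKmeas) hint2 hle
  -- eventual lower bounds on the empirical integrals
  have hy' := ProbabilityMeasure.tendsto_iff_forall_integral_tendsto.mp hy Fbcf
  have hw' := ProbabilityMeasure.tendsto_iff_forall_integral_tendsto.mp hw Fbcf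
  have hlt : 1 - 2 * η < ∫ u, h u ∂((graphJoin hφ μ : ProbabilityMeasure _) :
      Measure (G → X × Y)) := lt_of_lt_of_le (by linarith) hLint
  have hevy : ∀ᶠ n in atTop, 1 - 2 * η <
      ∫ u, h u ∂((empDist (σ n) (fun v => (x n v, y n v)) : ProbabilityMeasure _) :
        Measure (G → X × Y)) := hy'.eventually (eventually_gt_nhds hlt)
  have hevw : ∀ᶠ n in atTop, 1 - 2 * η <
      ∫ u, h u ∂((empDist (σ n) (fun v => (x n v, w n v)) : ProbabilityMeasure _) :
        Measure (G → X × Y)) := hw'.eventually (eventually_gt_nhds hlt)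
  filter_upwards [hevy, hevw] with n hyn hwn
  have hbd : ∀ u, ‖h u‖ ≤ 1 := fun u => by
    rw [Real.norm_eq_abs, abs_of_nonneg (hh01 u).1]; exact (hh01 u).2
  rw [integral_empDist (σ n) _ hhcont.stronglyMeasurable ⟨1, hbd⟩] at hyn hwn
  set N : ℝ := (Fintype.card (V n) : ℝ) with hNdef
  have hN : 0 < N := by rw [hNdef]; exact_mod_cast Fintype.card_pos
  set Sy : ℝ := ∑ v, h (pullbackName (σ n) v (fun v => (x n v, y n v))) with hSydef
  set Sw : ℝ := ∑ v, h (pullbackName (σ n) v (fun v => (x n v, w n v))) with hSwdef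
  -- pointwise estimate
  have key : ∀ v : V n, dist (y n ((σ n 1) v)) (w n ((σ n 1) v)) ≤
      ε₀ / 2 + D * (1 - h (pullbackName (σ n) v (fun v => (x n v, y n v))))
        + D * (1 - h (pullbackName (σ n) v (fun v => (x n v, w n v)))) := by
    intro v
    have hhy : h (pullbackName (σ n) v (fun v => (x n v, y n v))) =
        1 - f₀ (fun gg => x n ((σ n gg) v), y n ((σ n 1) v)) := rfl
    have hhw : h (pullbackName (σ n) v (fun v => (x n v, w n v))) =
        1 - f₀ (fun gg => x n ((σ n gg) v), w n ((σ n 1) v)) := rfl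
    rw [hhy, hhw]
    set py : (G → X) × Y := (fun gg => x n ((σ n gg) v), y n ((σ n 1) v)) with hpydef
    set pw : (G → X) × Y := (fun gg => x n ((σ n gg) v), w n ((σ n 1) v)) with hpwdef
    have h0y : 0 ≤ f₀ py := (hf₀mem py).1
    have h0w : 0 ≤ f₀ pw := (hf₀mem pw).1
    have h1y : f₀ py ≤ 1 := (hf₀mem py).2
    have h1w : f₀ pw ≤ 1 := (hf₀mem pw).2
    have hDy : 0 ≤ D * f₀ py := mul_nonneg hD0 h0y
    have hDw : 0 ≤ D * f₀ pw := mul_nonneg hD0 h0w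
    have hdb := hDbd (y n ((σ n 1) v)) (w n ((σ n 1) v))
    by_cases hy0 : 0 < 1 - f₀ py
    · by_cases hw0 : 0 < 1 - f₀ pw
      · have hd := hpair _ _ _ (hUof py hy0) (hUof pw hw0)
        have e1 : 1 - (1 - f₀ py) = f₀ py := by ring
        have e2 : 1 - (1 - f₀ pw) = f₀ pw := by ring
        rw [e1, e2]
        linarith
      · have hfw : f₀ pw = 1 := le_antisymm h1w (by linarith)
        rw [hfw]
        nlinarith
    · have hfy : f₀ py = 1 := le_antisymm h1y (by linarith)
      rw [hfy]
      nlinarith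
  -- sum the pointwise estimates
  have hsum1 : ∑ v, dist (y n v) (w n v)
      = ∑ v, dist (y n ((σ n 1) v)) (w n ((σ n 1) v)) :=
    (Equiv.sum_comp (σ n 1) (fun v => dist (y n v) (w n v))).symm
  have hsum2 : ∑ v, dist (y n ((σ n 1) v)) (w n ((σ n 1) v)) ≤
      N * (ε₀ / 2) + D * (N - Sy) + D * (N - Sw) := by
    calc ∑ v, dist (y n ((σ n 1) v)) (w n ((σ n 1) v))
        ≤ ∑ v : V n, (ε₀ / 2 + D * (1 - h (pullbackName (σ n) v (fun v => (x n v, y n v))))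
          + D * (1 - h (pullbackName (σ n) v (fun v => (x n v, w n v))))) :=
          Finset.sum_le_sum fun v _ => key v
      _ = N * (ε₀ / 2) + D * (N - Sy) + D * (N - Sw) := by
          obtain ⟨cst, hcst⟩ : ∃ c : ℝ, c = ε₀ / 2 + 2 * D := ⟨_, rfl⟩
          have expand : ∀ v : V n,
              ε₀ / 2 + D * (1 - h (pullbackName (σ n) v (fun v => (x n v, y n v))))
                + D * (1 - h (pullbackName (σ n) v (fun v => (x n v, w n v))))
              = cst - (D * h (pullbackName (σ n) v (fun v => (x n v, y n v)))
                + D * h (pullbackName (σ n) v (fun v => (x n v, w n v)))) := fun v => by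
            rw [hcst]; ring
          rw [Finset.sum_congr rfl (fun v _ => expand v), Finset.sum_sub_distrib,
            Finset.sum_add_distrib, ← Finset.mul_sum, ← Finset.mul_sum,
            Finset.sum_const, Finset.card_univ, nsmul_eq_mul]
          rw [hcst, hSydef, hSwdef, hNdef]
          ring
  have hnn : (0:ℝ) ≤ hamming dist (y n) (w n) := by
    have : hamming dist (y n) (w n) = (∑ v, dist (y n v) (w n v)) / N := rfl
    rw [this]
    exact div_nonneg (Finset.sum_nonneg fun _ _ => dist_nonneg) hN.le
  have hham : hamming dist (y n) (w n) ≤ ε₀ / 2 + D * (1 - Sy / N) + D * (1 - Sw / N) := by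
    have heq : hamming dist (y n) (w n) = (∑ v, dist (y n v) (w n v)) / N := rfl
    rw [heq, hsum1, div_le_iff₀ hN]
    calc ∑ v, dist (y n ((σ n 1) v)) (w n ((σ n 1) v))
        ≤ N * (ε₀ / 2) + D * (N - Sy) + D * (N - Sw) := hsum2
      _ = (ε₀ / 2 + D * (1 - Sy / N) + D * (1 - Sw / N)) * N := by
          field_simp
  have hyb : 1 - Sy / N ≤ 2 * η := by linarith
  have hwb : 1 - Sw / N ≤ 2 * η := by linarith
  have t1 : D * (1 - Sy / N) ≤ D * (2 * η) := mul_le_mul_of_nonneg_left hyb hD0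
  have t2 : D * (1 - Sw / N) ≤ D * (2 * η) := mul_le_mul_of_nonneg_left hwb hD0
  have hfin : hamming dist (y n) (w n) < ε₀ := by
    have hexp : 4 * (D * η) + 4 * η = 4 * (D + 1) * η := by ring
    linarith
  rw [Real.dist_0_eq_abs, abs_of_nonneg hnn]
  exact hfin
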